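/- arXiv:1408.0243 — 2 statements merged into one kernel-verified Lean document; each statement's English description precedes it below -/
import Mathlib

section
/- For arbitrary real constants c₁, c₂, c₃ with c₂ ≠ 0, on the domain where t + c₁ > 0 and c₂x + c₃ ≠ 0, the functions a(x,t) = 4(t+c₁)/(c₂x+c₃)², b(x,t) = 4c₂²(t+c₁)³/(c₂x+c₃)⁴, c(x,t) = 4c₂(t+c₁)²/(c₂x+c₃)³ satisfy the Einstein Walker PDE system. -/
/-- Partial derivative with respect to the first variable `x`. -/
noncomputable def pdx (f : ℝ → ℝ → ℝ) (x t : ℝ) : ℝ := deriv (fun x' => f x' t) x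

/-- Partial derivative with respect to the second variable `t`. -/
noncomputable def pdt (f : ℝ → ℝ → ℝ) (x t : ℝ) : ℝ := deriv (fun t' => f x t') t

/-- The six Einstein Walker PDEs for functions `a b c` of `(x,t)`, at the point `(x,t)`. -/
def EinsteinWalker (a b c : ℝ → ℝ → ℝ) (x t : ℝ) : Prop :=
  pdx (pdx a) x t - pdt (pdt b) x t = 0 ∧
  pdt (pdx b) x t + pdx (pdx c) x t = 0 ∧
  pdt (pdx a) x t + pdt (pdt c) x t = 0 ∧
  pdx a x t * pdt c x t + pdt a x t * pdt b x t - pdt a x t * pdx c x t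
    - (pdt c x t) ^ 2 + 2 * c x t * pdt (pdx a) x t + b x t * pdt (pdt a) x t
    - a x t * pdt (pdx c) x t = 0 ∧
  pdt a x t * pdx b x t - pdx c x t * pdt c x t + c x t * pdx (pdx a) x t
    - a x t * pdx (pdx c) x t - c x t * pdt (pdx c) x t - b x t * pdt (pdt c) x t = 0 ∧
  pdx a x t * pdx b x t - pdx b x t * pdt c x t + pdt b x t * pdx c x t
    - (pdx c x t) ^ 2 + a x t * pdx (pdx b) x t + 2 * c x t * pdt (pdx b) x t
    - b x t * pdt (pdx c) x t = 0

noncomputable def F (c₁ c₂ c₃ k : ℝ) (m n : ℕ) : ℝ → ℝ → ℝ :=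
  fun x t => k * (t + c₁) ^ m / (c₂ * x + c₃) ^ n

lemma Fx (c₁ c₂ c₃ k : ℝ) (m n : ℕ) (x t : ℝ) (hu : c₂ * x + c₃ ≠ 0) :
    pdx (F c₁ c₂ c₃ k m n) x t = F c₁ c₂ c₃ (-(n : ℝ) * c₂ * k) m (n + 1) x t := by
  have h1 : HasDerivAt (fun x' : ℝ => c₂ * x' + c₃) c₂ x := by
    simpa using ((hasDerivAt_id x).const_mul c₂).add_const c₃
  have h2 := (h1.pow n).inv (pow_ne_zero n hu)
  have h3 : HasDerivAt (fun x' => k * (t + c₁) ^ m * ((c₂ * x' + c₃) ^ n)⁻¹)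
      (k * (t + c₁) ^ m * (-(↑n * (c₂ * x + c₃) ^ (n - 1) * c₂) / ((c₂ * x + c₃) ^ n) ^ 2)) x :=
    h2.const_mul (k * (t + c₁) ^ m)
  have h4 : pdx (F c₁ c₂ c₃ k m n) x t
      = deriv (fun x' => k * (t + c₁) ^ m * ((c₂ * x' + c₃) ^ n)⁻¹) x := by
    simp [pdx, F, div_eq_mul_inv]
  rw [h4, h3.deriv]
  cases n with
  | zero => simp [F]
  | succ p =>
      simp only [F, Nat.succ_sub_one]
      field_simp
      ring

lemma Ft (c₁ c₂ c₃ k : ℝ) (m n : ℕ) (x t : ℝ) :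
    pdt (F c₁ c₂ c₃ k m n) x t = F c₁ c₂ c₃ (k * m) (m - 1) n x t := by
  have h1 : HasDerivAt (fun t' : ℝ => t' + c₁) 1 t := (hasDerivAt_id t).add_const c₁
  have h2 : HasDerivAt (fun t' => k * (t' + c₁) ^ m / (c₂ * x + c₃) ^ n)
      (k * (↑m * (t + c₁) ^ (m - 1) * 1) / (c₂ * x + c₃) ^ n) t :=
    ((h1.pow m).const_mul k).div_const ((c₂ * x + c₃) ^ n)
  have h4 : pdt (F c₁ c₂ c₃ k m n) x t
      = deriv (fun t' => k * (t' + c₁) ^ m / (c₂ * x + c₃) ^ n) t := rfl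
  rw [h4, h2.deriv]
  cases m with
  | zero => simp [F]
  | succ p =>
      simp only [F, Nat.succ_sub_one]
      push_cast
      ring

lemma Fxx (c₁ c₂ c₃ k : ℝ) (m n : ℕ) (x t : ℝ) (hu : c₂ * x + c₃ ≠ 0) :
    pdx (pdx (F c₁ c₂ c₃ k m n)) x t
      = F c₁ c₂ c₃ (-((n + 1 : ℕ) : ℝ) * c₂ * (-(n : ℝ) * c₂ * k)) m (n + 1 + 1) x t := by
  have hev : ∀ᶠ x' in nhds x, c₂ * x' + c₃ ≠ 0 := by
    have hc : ContinuousAt (fun x' : ℝ => c₂ * x' + c₃) x := by fun_prop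
    exact hc.eventually_ne hu
  have heq : (fun x' => pdx (F c₁ c₂ c₃ k m n) x' t)
      =ᶠ[nhds x] (fun x' => F c₁ c₂ c₃ (-(n : ℝ) * c₂ * k) m (n + 1) x' t) := by
    filter_upwards [hev] with x' hx' using Fx c₁ c₂ c₃ k m n x' t hx'
  show deriv (fun x' => pdx (F c₁ c₂ c₃ k m n) x' t) x = _
  rw [heq.deriv_eq]
  exact Fx c₁ c₂ c₃ (-(n : ℝ) * c₂ * k) m (n + 1) x t hu

lemma Fxt (c₁ c₂ c₃ k : ℝ) (m n : ℕ) (x t : ℝ) (hu : c₂ * x + c₃ ≠ 0) :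
    pdt (pdx (F c₁ c₂ c₃ k m n)) x t
      = F c₁ c₂ c₃ (-(n : ℝ) * c₂ * k * m) (m - 1) (n + 1) x t := by
  have heq : (fun t' => pdx (F c₁ c₂ c₃ k m n) x t')
      = (fun t' => F c₁ c₂ c₃ (-(n : ℝ) * c₂ * k) m (n + 1) x t') := by
    funext t'; exact Fx c₁ c₂ c₃ k m n x t' hu
  show deriv (fun t' => pdx (F c₁ c₂ c₃ k m n) x t') t = _
  rw [heq]
  exact Ft c₁ c₂ c₃ (-(n : ℝ) * c₂ * k) m (n + 1) x t

lemma Ftt (c₁ c₂ c₃ k : ℝ) (m n : ℕ) (x t : ℝ) :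
    pdt (pdt (F c₁ c₂ c₃ k m n)) x t = F c₁ c₂ c₃ (k * m * (m - 1 : ℕ)) (m - 1 - 1) n x t := by
  have heq : (fun t' => pdt (F c₁ c₂ c₃ k m n) x t')
      = (fun t' => F c₁ c₂ c₃ (k * m) (m - 1) n x t') := by
    funext t'; exact Ft c₁ c₂ c₃ k m n x t'
  show deriv (fun t' => pdt (F c₁ c₂ c₃ k m n) x t') t = _
  rw [heq]
  exact Ft c₁ c₂ c₃ (k * m) (m - 1) n x t

set_option maxHeartbeats 2000000 in
theorem stmt4 (c₁ c₂ c₃ : ℝ) (hc₂ : c₂ ≠ 0) :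
    ∀ x t : ℝ, 0 < t + c₁ → c₂ * x + c₃ ≠ 0 →
      EinsteinWalker (fun x t => 4 * (t + c₁) / (c₂ * x + c₃) ^ 2)
        (fun x t => 4 * c₂ ^ 2 * (t + c₁) ^ 3 / (c₂ * x + c₃) ^ 4)
        (fun x t => 4 * c₂ * (t + c₁) ^ 2 / (c₂ * x + c₃) ^ 3) x t := by
  intro x t ht hu
  have ha : (fun x t => 4 * (t + c₁) / (c₂ * x + c₃) ^ 2) = F c₁ c₂ c₃ 4 1 2 := by
    funext x t; simp [F]
  have hb : (fun x t => 4 * c₂ ^ 2 * (t + c₁) ^ 3 / (c₂ * x + c₃) ^ 4)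
      = F c₁ c₂ c₃ (4 * c₂ ^ 2) 3 4 := rfl
  have hc : (fun x t => 4 * c₂ * (t + c₁) ^ 2 / (c₂ * x + c₃) ^ 3)
      = F c₁ c₂ c₃ (4 * c₂) 2 3 := rfl
  rw [ha, hb, hc]
  unfold EinsteinWalker
  have hax := Fx c₁ c₂ c₃ 4 1 2 x t hu
  have hat := Ft c₁ c₂ c₃ 4 1 2 x t
  have haxx := Fxx c₁ c₂ c₃ 4 1 2 x t hu
  have haxt := Fxt c₁ c₂ c₃ 4 1 2 x t hu
  have hatt := Ftt c₁ c₂ c₃ 4 1 2 x t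
  have hbx := Fx c₁ c₂ c₃ (4 * c₂ ^ 2) 3 4 x t hu
  have hbt := Ft c₁ c₂ c₃ (4 * c₂ ^ 2) 3 4 x t
  have hbxx := Fxx c₁ c₂ c₃ (4 * c₂ ^ 2) 3 4 x t hu
  have hbxt := Fxt c₁ c₂ c₃ (4 * c₂ ^ 2) 3 4 x t hu
  have hbtt := Ftt c₁ c₂ c₃ (4 * c₂ ^ 2) 3 4 x t
  have hcx := Fx c₁ c₂ c₃ (4 * c₂) 2 3 x t hu
  have hct := Ft c₁ c₂ c₃ (4 * c₂) 2 3 x t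
  have hcxx := Fxx c₁ c₂ c₃ (4 * c₂) 2 3 x t hu
  have hcxt := Fxt c₁ c₂ c₃ (4 * c₂) 2 3 x t hu
  have hctt := Ftt c₁ c₂ c₃ (4 * c₂) 2 3 x t
  refine ⟨?_, ?_, ?_, ?_, ?_, ?_⟩ <;>
  · simp only [hax, hat, haxx, haxt, hatt, hbx, hbt, hbxx, hbxt, hbtt,
      hcx, hct, hcxx, hcxt, hctt, F]
    norm_num
    field_simp
    ring
end

section
/- For arbitrary real constants c₁, c₂, c₃, on the domain where t ≠ 0, the functions b(x,t) = (c₁ + c₂t³)/t, c(x,t) = (c₁ + c₂t³)(x − c₃)/t², and a(x,t) = (c₁ + c₂t³)(x − c₃)²/t³ satisfy the Einstein Walker PDE system. -/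
section EWAux
variable (c₁ c₂ c₃ : ℝ)

private lemma EW_hP (t : ℝ) : HasDerivAt (fun t' : ℝ => c₁ + c₂ * t' ^ 3) (c₂ * (3 * t ^ 2)) t := by
  simpa using ((hasDerivAt_pow 3 t).const_mul c₂).const_add c₁

/- ### first x-derivatives -/

private lemma EW_pdx_a (x t : ℝ) :
    pdx (fun x t => (c₁ + c₂ * t ^ 3) * (x - c₃) ^ 2 / t ^ 3) x t
      = 2 * (c₁ + c₂ * t ^ 3) * (x - c₃) / t ^ 3 := by
  have h : HasDerivAt (fun x' => (c₁ + c₂ * t ^ 3) * (x' - c₃) ^ 2 / t ^ 3)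
      ((c₁ + c₂ * t ^ 3) * (2 * (x - c₃) ^ 1 * 1) / t ^ 3) x :=
    ((((hasDerivAt_id x).sub_const c₃).pow 2).const_mul _).div_const _
  rw [pdx, h.deriv]; ring

private lemma EW_pdx_b (x t : ℝ) :
    pdx (fun _ t => (c₁ + c₂ * t ^ 3) / t) x t = 0 := by
  simp [pdx]

private lemma EW_pdx_c (x t : ℝ) :
    pdx (fun x t => (c₁ + c₂ * t ^ 3) * (x - c₃) / t ^ 2) x t
      = (c₁ + c₂ * t ^ 3) / t ^ 2 := by
  have h : HasDerivAt (fun x' => (c₁ + c₂ * t ^ 3) * (x' - c₃) / t ^ 2)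
      ((c₁ + c₂ * t ^ 3) * 1 / t ^ 2) x :=
    (((hasDerivAt_id x).sub_const c₃).const_mul _).div_const _
  rw [pdx, h.deriv]; ring

/- ### first t-derivatives -/

private lemma EW_pdt_a (x t : ℝ) (ht : t ≠ 0) :
    pdt (fun x t => (c₁ + c₂ * t ^ 3) * (x - c₃) ^ 2 / t ^ 3) x t
      = -3 * c₁ * (x - c₃) ^ 2 / t ^ 4 := by
  have h := ((EW_hP c₁ c₂ t).mul_const ((x - c₃) ^ 2)).fun_div (hasDerivAt_pow 3 t)
    (pow_ne_zero 3 ht)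
  rw [pdt, h.deriv]
  field_simp
  ring

private lemma EW_pdt_b (x t : ℝ) (ht : t ≠ 0) :
    pdt (fun _ t => (c₁ + c₂ * t ^ 3) / t) x t = (2 * c₂ * t ^ 3 - c₁) / t ^ 2 := by
  have h := (EW_hP c₁ c₂ t).fun_div (hasDerivAt_id t) ht
  simp only [id_eq] at h
  rw [pdt, h.deriv]
  field_simp
  ring

private lemma EW_pdt_c (x t : ℝ) (ht : t ≠ 0) :
    pdt (fun x t => (c₁ + c₂ * t ^ 3) * (x - c₃) / t ^ 2) x t
      = (x - c₃) * (c₂ * t ^ 3 - 2 * c₁) / t ^ 3 := by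
  have h := ((EW_hP c₁ c₂ t).mul_const (x - c₃)).fun_div (hasDerivAt_pow 2 t)
    (pow_ne_zero 2 ht)
  rw [pdt, h.deriv]
  field_simp
  ring

/- ### second derivatives -/

private lemma EW_pdx_pdx_a (x t : ℝ) :
    pdx (pdx (fun x t => (c₁ + c₂ * t ^ 3) * (x - c₃) ^ 2 / t ^ 3)) x t
      = 2 * (c₁ + c₂ * t ^ 3) / t ^ 3 := by
  have hfun : (fun x' => pdx (fun x t => (c₁ + c₂ * t ^ 3) * (x - c₃) ^ 2 / t ^ 3) x' t)
      = fun x' => 2 * (c₁ + c₂ * t ^ 3) * (x' - c₃) / t ^ 3 :=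
    funext fun x' => EW_pdx_a c₁ c₂ c₃ x' t
  have h : HasDerivAt (fun x' => 2 * (c₁ + c₂ * t ^ 3) * (x' - c₃) / t ^ 3)
      (2 * (c₁ + c₂ * t ^ 3) * 1 / t ^ 3) x :=
    (((hasDerivAt_id x).sub_const c₃).const_mul _).div_const _
  rw [pdx, hfun, h.deriv]; ring

private lemma EW_pdx_pdx_b (x t : ℝ) :
    pdx (pdx (fun _ t => (c₁ + c₂ * t ^ 3) / t)) x t = 0 := by
  have hfun : (fun x' => pdx (fun _ t => (c₁ + c₂ * t ^ 3) / t) x' t) = fun _ => (0 : ℝ) :=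
    funext fun x' => EW_pdx_b c₁ c₂ x' t
  rw [pdx, hfun, deriv_const]

private lemma EW_pdx_pdx_c (x t : ℝ) :
    pdx (pdx (fun x t => (c₁ + c₂ * t ^ 3) * (x - c₃) / t ^ 2)) x t = 0 := by
  have hfun : (fun x' => pdx (fun x t => (c₁ + c₂ * t ^ 3) * (x - c₃) / t ^ 2) x' t)
      = fun _ => (c₁ + c₂ * t ^ 3) / t ^ 2 :=
    funext fun x' => EW_pdx_c c₁ c₂ c₃ x' t
  rw [pdx, hfun, deriv_const]

private lemma EW_pdt_pdx_a (x t : ℝ) (ht : t ≠ 0) :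
    pdt (pdx (fun x t => (c₁ + c₂ * t ^ 3) * (x - c₃) ^ 2 / t ^ 3)) x t
      = -6 * c₁ * (x - c₃) / t ^ 4 := by
  have hev : (fun t' => pdx (fun x t => (c₁ + c₂ * t ^ 3) * (x - c₃) ^ 2 / t ^ 3) x t')
      =ᶠ[nhds t] fun t' => 2 * (c₁ + c₂ * t' ^ 3) * (x - c₃) / t' ^ 3 := by
    filter_upwards [eventually_ne_nhds ht] with t' _ using EW_pdx_a c₁ c₂ c₃ x t'
  have h := ((((EW_hP c₁ c₂ t).const_mul 2).mul_const (x - c₃)).fun_div (hasDerivAt_pow 3 t)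
    (pow_ne_zero 3 ht))
  rw [pdt, hev.deriv_eq, h.deriv]
  field_simp
  ring

private lemma EW_pdt_pdx_b (x t : ℝ) :
    pdt (pdx (fun _ t => (c₁ + c₂ * t ^ 3) / t)) x t = 0 := by
  have hfun : (fun t' => pdx (fun _ t => (c₁ + c₂ * t ^ 3) / t) x t') = fun _ => (0 : ℝ) :=
    funext fun t' => EW_pdx_b c₁ c₂ x t'
  rw [pdt, hfun, deriv_const]

private lemma EW_pdt_pdx_c (x t : ℝ) (ht : t ≠ 0) :
    pdt (pdx (fun x t => (c₁ + c₂ * t ^ 3) * (x - c₃) / t ^ 2)) x t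
      = (c₂ * t ^ 3 - 2 * c₁) / t ^ 3 := by
  have hev : (fun t' => pdx (fun x t => (c₁ + c₂ * t ^ 3) * (x - c₃) / t ^ 2) x t')
      =ᶠ[nhds t] fun t' => (c₁ + c₂ * t' ^ 3) / t' ^ 2 := by
    filter_upwards [eventually_ne_nhds ht] with t' _ using EW_pdx_c c₁ c₂ c₃ x t'
  have h := (EW_hP c₁ c₂ t).fun_div (hasDerivAt_pow 2 t) (pow_ne_zero 2 ht)
  rw [pdt, hev.deriv_eq, h.deriv]
  field_simp
  ring

private lemma EW_pdt_pdt_a (x t : ℝ) (ht : t ≠ 0) :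
    pdt (pdt (fun x t => (c₁ + c₂ * t ^ 3) * (x - c₃) ^ 2 / t ^ 3)) x t
      = 12 * c₁ * (x - c₃) ^ 2 / t ^ 5 := by
  have hev : (fun t' => pdt (fun x t => (c₁ + c₂ * t ^ 3) * (x - c₃) ^ 2 / t ^ 3) x t')
      =ᶠ[nhds t] fun t' => -3 * c₁ * (x - c₃) ^ 2 / t' ^ 4 := by
    filter_upwards [eventually_ne_nhds ht] with t' ht' using EW_pdt_a c₁ c₂ c₃ x t' ht'
  have h : HasDerivAt (fun t' : ℝ => -3 * c₁ * (x - c₃) ^ 2 / t' ^ 4)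
      ((0 * t ^ 4 - (-3 * c₁ * (x - c₃) ^ 2) * ((4 : ℕ) * t ^ 3)) / (t ^ 4) ^ 2) t :=
    (hasDerivAt_const t _).div (hasDerivAt_pow 4 t) (pow_ne_zero 4 ht)
  rw [pdt, hev.deriv_eq, h.deriv]
  field_simp
  ring

private lemma EW_pdt_pdt_b (x t : ℝ) (ht : t ≠ 0) :
    pdt (pdt (fun _ t => (c₁ + c₂ * t ^ 3) / t)) x t
      = 2 * (c₁ + c₂ * t ^ 3) / t ^ 3 := by
  have hev : (fun t' => pdt (fun _ t => (c₁ + c₂ * t ^ 3) / t) x t')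
      =ᶠ[nhds t] fun t' => (2 * c₂ * t' ^ 3 - c₁) / t' ^ 2 := by
    filter_upwards [eventually_ne_nhds ht] with t' ht' using EW_pdt_b c₁ c₂ x t' ht'
  have h := (((hasDerivAt_pow 3 t).const_mul (2 * c₂)).sub_const c₁).fun_div
    (hasDerivAt_pow 2 t) (pow_ne_zero 2 ht)
  rw [pdt, hev.deriv_eq, h.deriv]
  field_simp
  ring

private lemma EW_pdt_pdt_c (x t : ℝ) (ht : t ≠ 0) :
    pdt (pdt (fun x t => (c₁ + c₂ * t ^ 3) * (x - c₃) / t ^ 2)) x t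
      = 6 * c₁ * (x - c₃) / t ^ 4 := by
  have hev : (fun t' => pdt (fun x t => (c₁ + c₂ * t ^ 3) * (x - c₃) / t ^ 2) x t')
      =ᶠ[nhds t] fun t' => (x - c₃) * (c₂ * t' ^ 3 - 2 * c₁) / t' ^ 3 := by
    filter_upwards [eventually_ne_nhds ht] with t' ht' using EW_pdt_c c₁ c₂ c₃ x t' ht'
  have h := ((((hasDerivAt_pow 3 t).const_mul c₂).sub_const (2 * c₁)).const_mul
    (x - c₃)).fun_div (hasDerivAt_pow 3 t) (pow_ne_zero 3 ht)
  rw [pdt, hev.deriv_eq, h.deriv]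
  field_simp
  ring

end EWAux

theorem stmt5 (c₁ c₂ c₃ : ℝ) :
    ∀ x t : ℝ, t ≠ 0 →
      EinsteinWalker (fun x t => (c₁ + c₂ * t ^ 3) * (x - c₃) ^ 2 / t ^ 3)
        (fun _ t => (c₁ + c₂ * t ^ 3) / t)
        (fun x t => (c₁ + c₂ * t ^ 3) * (x - c₃) / t ^ 2) x t := by
  intro x t ht
  refine ⟨?_, ?_, ?_, ?_, ?_, ?_⟩ <;>
    simp only [EW_pdx_a, EW_pdx_b, EW_pdx_c, EW_pdt_a c₁ c₂ c₃ x t ht,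
      EW_pdt_b c₁ c₂ x t ht, EW_pdt_c c₁ c₂ c₃ x t ht,
      EW_pdx_pdx_a, EW_pdx_pdx_b, EW_pdx_pdx_c,
      EW_pdt_pdx_a c₁ c₂ c₃ x t ht, EW_pdt_pdx_b, EW_pdt_pdx_c c₁ c₂ c₃ x t ht,
      EW_pdt_pdt_a c₁ c₂ c₃ x t ht, EW_pdt_pdt_b c₁ c₂ x t ht,
      EW_pdt_pdt_c c₁ c₂ c₃ x t ht] <;>
    field_simp <;>
    ring
end
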